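/- If p = c, then for any collection P of at most continuum many proper forcing posets each of size at most continuum, there exists a maximal tower of length c that remains maximal (has no pseudointersection) in any forcing extension by a poset from P. -/

import Mathlib

def AlmostSub (a b : Set ℕ) : Prop := (a \ b).Finite

/-- The pseudointersection number `𝔭`: the least cardinality of a family of subsets of `ω`
with the finite intersection property but no pseudointersection. -/
noncomputable def pseudoNumber : Cardinal :=
  sInf { c : Cardinal | ∃ F : Set (Set ℕ), Cardinal.mk F = c ∧
    (∀ G : Finset (Set ℕ), ↑G ⊆ F → (⋂ a ∈ (G : Set (Set ℕ)), a).Infinite) ∧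
    ¬ ∃ z : Set ℕ, z.Infinite ∧ ∀ a ∈ F, AlmostSub z a }

section Forcing

variable {Q : Type} [Preorder Q]

/-- `A` is an antichain in the forcing poset `Q` (pairwise incompatible). -/
def IsForcingAntichain (A : Set Q) : Prop :=
  ∀ p ∈ A, ∀ q ∈ A, p ≠ q → ¬ ∃ s, s ≤ p ∧ s ≤ q

/-- `q` forces `m ∈ ẏ`, where the nice name `ẏ` is given by antichains `A n`:
densely below `q` every condition lies below some member of `A m`. -/
def forcesMem (q : Q) (A : ℕ → Set Q) (m : ℕ) : Prop :=
  ∀ r, r ≤ q → ∃ s, s ≤ r ∧ ∃ p ∈ A m, s ≤ p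

/-- `p` forces that the name `ẏ` denotes an infinite subset of `ω`. -/
def forcesInfinite (p : Q) (A : ℕ → Set Q) : Prop :=
  ∀ n, ∀ r, r ≤ p → ∃ s, s ≤ r ∧ ∃ m, n ≤ m ∧ forcesMem s A m

/-- `q` forces `ẏ ⊄* x`: densely below `q` one forces arbitrarily large elements of
`ẏ` outside `x`. -/
def forcesNotAlmostSub (q : Q) (A : ℕ → Set Q) (x : Set ℕ) : Prop :=
  ∀ n, ∀ r, r ≤ q → ∃ s, s ≤ r ∧ ∃ m, n ≤ m ∧ m ∉ x ∧ forcesMem s A m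

end Forcing

/-! ### Auxiliary lemmas -/

lemma almostSub_refl (a : Set ℕ) : AlmostSub a a := by
  simp [AlmostSub]

lemma almostSub_trans {a b c : Set ℕ} (h1 : AlmostSub a b) (h2 : AlmostSub b c) :
    AlmostSub a c := by
  have : a \ c ⊆ (a \ b) ∪ (b \ c) := by
    intro m hm
    by_cases hb : m ∈ b
    · exact Or.inr ⟨hb, hm.2⟩
    · exact Or.inl ⟨hm.1, hb⟩
  exact (h1.union h2).subset this

lemma almostSub_of_subset {x y a : Set ℕ} (hxy : x ⊆ y) (h : AlmostSub y a) :
    AlmostSub x a :=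
  h.subset (Set.diff_subset_diff_left hxy)

lemma nat_infinite_of_unbdd {s : Set ℕ} (h : ∀ n, ∃ m, m ∈ s ∧ n ≤ m) : s.Infinite := by
  by_contra hf
  rw [Set.not_infinite] at hf
  obtain ⟨B, hB⟩ := hf.bddAbove
  obtain ⟨m, hm, hle⟩ := h (B + 1)
  exact absurd (hB hm) (by omega)

/-- Split an infinite subset of ℕ into two infinite pieces. -/
lemma infinite_exists_split {y : Set ℕ} (hy : y.Infinite) :
    ∃ w : Set ℕ, w ⊆ y ∧ w.Infinite ∧ (y \ w).Infinite := by
  have hy' : (setOf (· ∈ y)).Infinite := hy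
  set f := Nat.nth (· ∈ y) with hf
  have hmem : ∀ n, f n ∈ y := fun n => Nat.nth_mem_of_infinite hy' n
  have hinj : Function.Injective f := Nat.nth_injective hy'
  refine ⟨Set.range (fun k => f (2 * k)), ?_, ?_, ?_⟩
  · rintro m ⟨k, rfl⟩; exact hmem _
  · exact Set.infinite_range_of_injective (fun a b h => by
      have := hinj h; omega)
  · have hsub : Set.range (fun k => f (2 * k + 1)) ⊆ y \ Set.range (fun k => f (2 * k)) := by
      rintro m ⟨k, rfl⟩
      refine ⟨hmem _, ?_⟩
      rintro ⟨k', hk'⟩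
      have := hinj hk'
      omega
    exact (Set.infinite_range_of_injective (fun a b h => by
      have := hinj h; omega)).mono hsub

/-- In a finite subfamily of an almost-inclusion chain there is an almost-least element. -/
lemma exists_almost_least {F : Set (Set ℕ)}
    (hch : ∀ a ∈ F, ∀ b ∈ F, AlmostSub a b ∨ AlmostSub b a) :
    ∀ G : Finset (Set ℕ), ↑G ⊆ F → G.Nonempty → ∃ a ∈ G, ∀ b ∈ G, AlmostSub a b := by
  classical
  intro G
  induction G using Finset.induction_on with
  | empty => intro _ h; simp at h
  | @insert c G hc ih =>
    intro hsub _
    rcases G.eq_empty_or_nonempty with rfl | hne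
    · refine ⟨c, by simp, ?_⟩
      intro b hb
      simp only [Finset.mem_insert, Finset.notMem_empty, or_false] at hb
      subst hb; exact almostSub_refl _
    · have hGF : ↑G ⊆ F := fun a ha => hsub (by simp [ha])
      obtain ⟨a, haG, hleast⟩ := ih hGF hne
      have haF : a ∈ F := hGF haG
      have hcF : c ∈ F := hsub (by simp)
      rcases hch c hcF a haF with h | h
      · refine ⟨c, by simp, ?_⟩
        intro b hb
        rcases Finset.mem_insert.1 hb with rfl | hb
        · exact almostSub_refl b
        · exact almostSub_trans h (hleast b hb)
      · refine ⟨a, by simp [haG], ?_⟩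
        intro b hb
        rcases Finset.mem_insert.1 hb with rfl | hb
        · exact h
        · exact hleast b hb

/-- A chain of infinite sets under almost-inclusion has the finite intersection property. -/
lemma chain_fip {F : Set (Set ℕ)} (hinf : ∀ a ∈ F, a.Infinite)
    (hch : ∀ a ∈ F, ∀ b ∈ F, AlmostSub a b ∨ AlmostSub b a) :
    ∀ G : Finset (Set ℕ), ↑G ⊆ F → (⋂ a ∈ (G : Set (Set ℕ)), a).Infinite := by
  intro G hG
  rcases G.eq_empty_or_nonempty with rfl | hne
  · simpa using Set.infinite_univ
  obtain ⟨a, haG, hleast⟩ := exists_almost_least hch G hG hne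
  have h1 : (a \ ⋃ b ∈ (G : Set (Set ℕ)), (a \ b)).Infinite := by
    refine (hinf a (hG haG)).diff ?_
    exact Set.Finite.biUnion G.finite_toSet (fun b hb => hleast b hb)
  refine h1.mono ?_
  intro m hm
  simp only [Set.mem_iInter]
  intro b hb
  by_contra hmb
  exact hm.2 (Set.mem_biUnion hb ⟨hm.1, hmb⟩)

/-- Families of size < 𝔭 with the FIP have a pseudointersection. -/
lemma pseudo_of_lt_p (hp : pseudoNumber = Cardinal.continuum) {F : Set (Set ℕ)}
    (hcard : Cardinal.mk F < Cardinal.continuum)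
    (hfip : ∀ G : Finset (Set ℕ), ↑G ⊆ F → (⋂ a ∈ (G : Set (Set ℕ)), a).Infinite) :
    ∃ z : Set ℕ, z.Infinite ∧ ∀ a ∈ F, AlmostSub z a := by
  by_contra h
  have hmem : Cardinal.mk F ∈ { c : Cardinal | ∃ F' : Set (Set ℕ), Cardinal.mk F' = c ∧
      (∀ G : Finset (Set ℕ), ↑G ⊆ F' → (⋂ a ∈ (G : Set (Set ℕ)), a).Infinite) ∧
      ¬ ∃ z : Set ℕ, z.Infinite ∧ ∀ a ∈ F', AlmostSub z a } := ⟨F, rfl, hfip, h⟩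
  have hle : pseudoNumber ≤ Cardinal.mk F := csInf_le' hmem
  rw [hp] at hle
  exact absurd hle (not_le.2 hcard)

section ForcingAux
variable {Q : Type} [Preorder Q]

/-- The set of `m` whose antichain `A m` contains a condition compatible with `r`. -/
def Ys (A : ℕ → Set Q) (r : Q) : Set ℕ := {m | ∃ s ∈ A m, ∃ u, u ≤ r ∧ u ≤ s}

lemma forcesMem_of_le {u s : Q} {A : ℕ → Set Q} {m : ℕ} (hs : s ∈ A m) (h : u ≤ s) :
    forcesMem u A m := fun r hr => ⟨r, le_refl r, s, hs, le_trans hr h⟩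

lemma Ys_mono {A : ℕ → Set Q} {r r' : Q} (h : r' ≤ r) : Ys A r' ⊆ Ys A r := by
  rintro m ⟨s, hs, u, hur', hus⟩
  exact ⟨s, hs, u, le_trans hur' h, hus⟩

lemma Ys_infinite {A : ℕ → Set Q} {p : Q} (hp : forcesInfinite p A) {r : Q} (hr : r ≤ p) :
    (Ys A r).Infinite := by
  apply nat_infinite_of_unbdd
  intro n
  obtain ⟨s, hsr, m, hnm, hmem⟩ := hp n r hr
  obtain ⟨u, hus, p', hp', hup'⟩ := hmem s (le_refl s)
  exact ⟨m, ⟨p', hp', u, le_trans hus hsr, hup'⟩, hnm⟩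

/-- The key dichotomy step: given any infinite `y`, we can find an infinite `x ⊆ y` such
that some `q ≤ p` forces the name not to be almost contained in `x`. -/
lemma forcing_stage (A : ℕ → Set Q) (p : Q) {y : Set ℕ} (hy : y.Infinite) :
    ∃ x : Set ℕ, x.Infinite ∧ x ⊆ y ∧
      (forcesInfinite p A → ∃ q, q ≤ p ∧ forcesNotAlmostSub q A x) := by
  by_cases hfi : forcesInfinite p A
  · obtain ⟨w, hwy, hwinf, hywinf⟩ := infinite_exists_split hy
    by_cases hcase : ∀ q, q ≤ p → (Ys A q ∩ w).Infinite
    · -- the name is forced to meet `w` infinitely; remove `w`.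
      refine ⟨y \ w, hywinf, Set.diff_subset, fun _ => ⟨p, le_refl p, ?_⟩⟩
      intro n r hr
      obtain ⟨m, hm, hnm⟩ := (hcase r hr).exists_gt n
      obtain ⟨s, hsAm, u, hur, hus⟩ := hm.1
      exact ⟨u, hur, m, le_of_lt hnm, fun hmx => hmx.2 hm.2, forcesMem_of_le hsAm hus⟩
    · -- some `q` forces the name almost outside `w`; take `x = w`.
      push_neg at hcase
      obtain ⟨q, hqp, hqfin⟩ := hcase
      refine ⟨w, hwinf, hwy, fun _ => ⟨q, hqp, ?_⟩⟩
      intro n r hr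
      have h1 : (Ys A r).Infinite := Ys_infinite hfi (le_trans hr hqp)
      have h2 : (Ys A r ∩ w).Finite := hqfin.subset (by
        exact Set.inter_subset_inter_left w (Ys_mono hr))
      have h3 : (Ys A r \ w).Infinite := by
        refine (h1.diff h2).mono ?_
        intro m hm
        exact ⟨hm.1, fun hw => hm.2 ⟨hm.1, hw⟩⟩
      obtain ⟨m, hm, hnm⟩ := h3.exists_gt n
      obtain ⟨s, hsAm, u, hur, hus⟩ := hm.1
      exact ⟨u, hur, m, le_of_lt hnm, hm.2, forcesMem_of_le hsAm hus⟩
  · exact ⟨y, hy, subset_rfl, fun h => absurd h hfi⟩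

end ForcingAux

/-- Diagonalization step against a single ground-model set `z`. -/
lemma diag_stage (z : Set ℕ) {y : Set ℕ} (hy : y.Infinite) :
    ∃ x : Set ℕ, x.Infinite ∧ x ⊆ y ∧ (z.Infinite → (z \ x).Infinite) := by
  by_cases hzy : (z \ y).Infinite
  · exact ⟨y, hy, subset_rfl, fun _ => hzy⟩
  by_cases hz : z.Infinite
  · rw [Set.not_infinite] at hzy
    have hv : (z ∩ y).Infinite := by
      have := hz.diff hzy
      refine this.mono ?_
      intro m hm
      exact ⟨hm.1, by_contra fun hmy => hm.2 ⟨hm.1, hmy⟩⟩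
    obtain ⟨w, hwv, hwinf, hvw⟩ := infinite_exists_split hv
    refine ⟨y \ w, ?_, Set.diff_subset, fun _ => ?_⟩
    · exact hvw.mono (fun m hm => ⟨hm.1.2, hm.2⟩)
    · refine hwinf.mono ?_
      intro m hm
      exact ⟨(hwv hm).1, fun hx => hx.2 hm⟩
  · exact ⟨y, hy, subset_rfl, fun h => absurd h hz⟩

/-! ### Task encoding -/

/-- Decode a function `ℕ → ℕ → Option X` into a sequence of (countable) subsets of `X`. -/
def decodeName {X : Type} (f : ℕ → ℕ → Option X) : ℕ → Set X :=
  fun n => {a | ∃ k, f n k = some a}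

/-- Tasks for the recursive construction: either a ground model set to diagonalize against,
or a (coded) triple of a poset, a nice name, and a condition. -/
def TaskT (I : Type) (P : I → Type) : Type :=
  (Set ℕ) ⊕ (Σ i : I, ((ℕ → ℕ → Option (P i)) × P i))

/-- What it means to fulfil a task with the set `x`. -/
def TaskDone {I : Type} {P : I → Type} [∀ i, Preorder (P i)]
    (t : TaskT I P) (x : Set ℕ) : Prop :=
  match t with
  | Sum.inl z => z.Infinite → (z \ x).Infinite
  | Sum.inr ⟨_, f, p⟩ =>
      forcesInfinite p (decodeName f) → ∃ q, q ≤ p ∧ forcesNotAlmostSub q (decodeName f) x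

lemma countable_decode {X : Type} {s : Set X} (hs : s.Countable) :
    ∃ f : ℕ → Option X, s = {a | ∃ k, f k = some a} := by
  rcases s.eq_empty_or_nonempty with rfl | hne
  · exact ⟨fun _ => none, by ext a; simp⟩
  · obtain ⟨g, hg⟩ := (Set.Countable.exists_eq_range hs hne)
    refine ⟨fun k => some (g k), ?_⟩
    rw [hg]; ext a
    simp only [Set.mem_range, Set.mem_setOf_eq, Option.some_inj]

/-- One step of the construction. -/
lemma stage_exists {I : Type} {P : I → Type} [∀ i, Preorder (P i)]
    (hp : pseudoNumber = Cardinal.continuum) (prev : Set (Set ℕ))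
    (hprev_inf : ∀ a ∈ prev, a.Infinite)
    (hch : ∀ a ∈ prev, ∀ b ∈ prev, AlmostSub a b ∨ AlmostSub b a)
    (hcard : Cardinal.mk prev < Cardinal.continuum)
    (t : TaskT I P) :
    ∃ x : Set ℕ, x.Infinite ∧ (∀ a ∈ prev, AlmostSub x a) ∧ TaskDone t x := by
  obtain ⟨y, hyinf, hy⟩ := pseudo_of_lt_p hp hcard (chain_fip hprev_inf hch)
  have key : ∀ x : Set ℕ, x ⊆ y → ∀ a ∈ prev, AlmostSub x a :=
    fun x hx a ha => almostSub_of_subset hx (hy a ha)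
  match t with
  | Sum.inl z =>
      obtain ⟨x, hx1, hx2, hx3⟩ := diag_stage z hyinf
      exact ⟨x, hx1, key x hx2, hx3⟩
  | Sum.inr ⟨i, f, p⟩ =>
      obtain ⟨x, hx1, hx2, hx3⟩ := forcing_stage (decodeName f) p hyinf
      exact ⟨x, hx1, key x hx2, hx3⟩

/-- The tower, built by transfinite recursion along `𝔠.ord.ToType`. -/
noncomputable def towerFun (I : Type) (P : I → Type) [∀ i, Preorder (P i)]
    (e : Cardinal.continuum.{0}.ord.ToType → TaskT I P) :
    Cardinal.continuum.{0}.ord.ToType → Set ℕ :=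
  WellFounded.fix wellFounded_lt (fun α ih =>
    Classical.epsilon (fun x : Set ℕ => x.Infinite ∧
      (∀ a ∈ {b : Set ℕ | ∃ β, ∃ hβ : β < α, ih β hβ = b}, AlmostSub x a) ∧
      TaskDone (e α) x))

lemma towerFun_eq (I : Type) (P : I → Type) [∀ i, Preorder (P i)]
    (e : Cardinal.continuum.{0}.ord.ToType → TaskT I P) (α : Cardinal.continuum.{0}.ord.ToType) :
    towerFun I P e α = Classical.epsilon (fun x : Set ℕ => x.Infinite ∧
      (∀ a ∈ {b : Set ℕ | ∃ β, ∃ _ : β < α, towerFun I P e β = b}, AlmostSub x a) ∧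
      TaskDone (e α) x) :=
  WellFounded.fix_eq _ _ _

lemma towerFun_spec {I : Type} {P : I → Type} [∀ i, Preorder (P i)]
    (hp : pseudoNumber = Cardinal.continuum)
    (e : Cardinal.continuum.{0}.ord.ToType → TaskT I P)
    (α : Cardinal.continuum.{0}.ord.ToType) :
    (towerFun I P e α).Infinite ∧
      (∀ β, β < α → AlmostSub (towerFun I P e α) (towerFun I P e β)) ∧
      TaskDone (e α) (towerFun I P e α) := by
  induction α using WellFoundedLT.induction with
  | ind α ih =>
    have hex : ∃ x : Set ℕ, x.Infinite ∧
        (∀ a ∈ {b : Set ℕ | ∃ β, ∃ _ : β < α, towerFun I P e β = b}, AlmostSub x a) ∧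
        TaskDone (e α) x := by
      apply stage_exists hp
      · rintro a ⟨β, hβ, rfl⟩; exact (ih β hβ).1
      · rintro a ⟨β, hβ, rfl⟩ b ⟨γ, hγ, rfl⟩
        rcases lt_trichotomy β γ with h | h | h
        · exact Or.inr ((ih γ hγ).2.1 β h)
        · subst h; exact Or.inl (almostSub_refl _)
        · exact Or.inl ((ih β hβ).2.1 γ h)
      · have hsurj : Function.Surjective
            (fun b : Set.Iio α =>
              (⟨towerFun I P e b.1, b.1, b.2, rfl⟩ :
                {b : Set ℕ | ∃ β, ∃ _ : β < α, towerFun I P e β = b})) := by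
          rintro ⟨b, β, hβ, rfl⟩; exact ⟨⟨β, hβ⟩, rfl⟩
        have h1 : Cardinal.mk {b : Set ℕ | ∃ β, ∃ _ : β < α, towerFun I P e β = b}
            ≤ Cardinal.mk (Set.Iio α) := Cardinal.mk_le_of_surjective hsurj
        exact lt_of_le_of_lt h1 (Cardinal.mk_Iio_ord_toType α)
    have hspec := Classical.epsilon_spec hex
    rw [towerFun_eq I P e α]
    exact ⟨hspec.1, fun β hβ => hspec.2.1 _ ⟨β, hβ, rfl⟩, hspec.2.2⟩

/-- The set of tasks has size at most continuum. -/
lemma taskT_card {I : Type} (hI : Cardinal.mk I ≤ Cardinal.continuum)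
    (P : I → Type) (hP : ∀ i, Cardinal.mk (P i) ≤ Cardinal.continuum) :
    Cardinal.mk (TaskT I P) ≤ Cardinal.continuum := by
  have hopt : ∀ i, Cardinal.mk (Option (P i)) ≤ Cardinal.continuum := by
    intro i
    rw [Cardinal.mk_option]
    calc Cardinal.mk (P i) + 1
        ≤ Cardinal.continuum + Cardinal.continuum :=
          add_le_add (hP i) (le_trans Cardinal.one_le_aleph0 Cardinal.aleph0_le_continuum)
      _ = Cardinal.continuum := Cardinal.add_eq_self Cardinal.aleph0_le_continuum
  have harrow1 : ∀ i, Cardinal.mk (ℕ → Option (P i)) ≤ Cardinal.continuum := by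
    intro i
    rw [Cardinal.mk_arrow, Cardinal.lift_id, Cardinal.lift_id, Cardinal.mk_nat]
    calc Cardinal.mk (Option (P i)) ^ Cardinal.aleph0
        ≤ Cardinal.continuum ^ Cardinal.aleph0 := Cardinal.power_le_power_right (hopt i)
      _ = Cardinal.continuum := Cardinal.continuum_power_aleph0
  have harrow : ∀ i, Cardinal.mk (ℕ → ℕ → Option (P i)) ≤ Cardinal.continuum := by
    intro i
    rw [Cardinal.mk_arrow, Cardinal.lift_id, Cardinal.lift_id, Cardinal.mk_nat]
    calc Cardinal.mk (ℕ → Option (P i)) ^ Cardinal.aleph0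
        ≤ Cardinal.continuum ^ Cardinal.aleph0 := Cardinal.power_le_power_right (harrow1 i)
      _ = Cardinal.continuum := Cardinal.continuum_power_aleph0
  have hsig : Cardinal.mk (Σ i : I, ((ℕ → ℕ → Option (P i)) × P i)) ≤ Cardinal.continuum := by
    rw [Cardinal.mk_sigma]
    calc Cardinal.sum (fun i => Cardinal.mk ((ℕ → ℕ → Option (P i)) × P i))
        ≤ Cardinal.sum (fun _ : I => Cardinal.continuum) := by
          apply Cardinal.sum_le_sum
          intro i
          rw [Cardinal.mk_prod, Cardinal.lift_id, Cardinal.lift_id]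
          calc Cardinal.mk (ℕ → ℕ → Option (P i)) * Cardinal.mk (P i)
              ≤ Cardinal.continuum * Cardinal.continuum := mul_le_mul' (harrow i) (hP i)
            _ = Cardinal.continuum := Cardinal.mul_eq_self Cardinal.aleph0_le_continuum
      _ = Cardinal.mk I * Cardinal.continuum := Cardinal.sum_const' I _
      _ ≤ Cardinal.continuum * Cardinal.continuum := mul_le_mul_left hI _
      _ = Cardinal.continuum := Cardinal.mul_eq_self Cardinal.aleph0_le_continuum
  unfold TaskT
  rw [Cardinal.mk_sum, Cardinal.lift_id, Cardinal.lift_id, Cardinal.mk_set, Cardinal.mk_nat,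
    Cardinal.two_power_aleph0]
  calc Cardinal.continuum + Cardinal.mk (Σ i : I, ((ℕ → ℕ → Option (P i)) × P i))
      ≤ Cardinal.continuum + Cardinal.continuum := add_le_add le_rfl hsig
    _ = Cardinal.continuum := Cardinal.add_eq_self Cardinal.aleph0_le_continuum

/-- If `𝔭 = 𝔠`, then for any collection of at most continuum many (proper) posets, each of
size at most continuum, there is a maximal tower of length `𝔠` that stays maximal after
forcing with any poset from the collection: for every nice name `ẏ` (given by countable
antichains, as properness provides) for an infinite subset of `ω` and every condition `p`,
some `q ≤ p` forces `ẏ` not to be almost contained in some member of the tower. -/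
theorem indestructible_maximal_tower
    (hp : pseudoNumber = Cardinal.continuum)
    (I : Type) (hI : Cardinal.mk I ≤ Cardinal.continuum)
    (P : I → Type) [∀ i, Preorder (P i)]
    (hP : ∀ i, Cardinal.mk (P i) ≤ Cardinal.continuum) :
    ∃ (ι : Type) (r : ι → ι → Prop), IsWellOrder ι r ∧
      Cardinal.mk ι = Cardinal.continuum ∧
      ∃ x : ι → Set ℕ,
        (∀ j, (x j).Infinite) ∧
        (∀ j k, r j k → AlmostSub (x k) (x j)) ∧
        (¬ ∃ z : Set ℕ, z.Infinite ∧ ∀ j, AlmostSub z (x j)) ∧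
        ∀ i : I, ∀ A : ℕ → Set (P i),
          (∀ n, (A n).Countable) → (∀ n, IsForcingAntichain (A n)) →
          ∀ p : P i, forcesInfinite p A →
            ∃ q, q ≤ p ∧ ∃ j, forcesNotAlmostSub q A (x j) := by
  classical
  have hle : Cardinal.mk (TaskT I P) ≤ Cardinal.mk (Cardinal.continuum.{0}.ord.ToType) := by
    rw [Cardinal.mk_ord_toType]
    exact taskT_card hI P hP
  obtain ⟨emb⟩ := (Cardinal.le_def _ _).1 hle
  have hne : Nonempty (TaskT I P) := ⟨Sum.inl ∅⟩
  set e : Cardinal.continuum.{0}.ord.ToType → TaskT I P := Function.invFun emb with he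
  have hesurj : Function.Surjective e := Function.invFun_surjective emb.injective
  set x := towerFun I P e with hx
  have hspec := towerFun_spec hp e
  refine ⟨Cardinal.continuum.{0}.ord.ToType, (· < ·), isWellOrder_lt,
    Cardinal.mk_ord_toType _, x, fun j => (hspec j).1, fun j k h => (hspec k).2.1 j h, ?_, ?_⟩
  · rintro ⟨z, hzinf, hz⟩
    obtain ⟨α, hα⟩ := hesurj (Sum.inl z)
    have hT := (hspec α).2.2
    rw [hα] at hT
    exact (hT hzinf) (hz α)
  · intro i A hcount _ p hforce
    have hf : ∀ n, ∃ g : ℕ → Option (P i), A n = {a | ∃ k, g k = some a} :=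
      fun n => countable_decode (hcount n)
    choose f hfspec using hf
    have hA : decodeName f = A := by
      funext n
      exact (hfspec n).symm
    obtain ⟨α, hα⟩ := hesurj (Sum.inr ⟨i, f, p⟩)
    have hT := (hspec α).2.2
    rw [hα] at hT
    have hT' : forcesInfinite p (decodeName f) →
        ∃ q, q ≤ p ∧ forcesNotAlmostSub q (decodeName f) (x α) := hT
    rw [hA] at hT'
    obtain ⟨q, hq, hfn⟩ := hT' hforce
    exact ⟨q, hq, α, hfn⟩
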